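/- For every fixed real number a > 0, the function x ↦ I(x,a) is strictly concave on (0,∞). -/

import Mathlib

/-- The logarithmic mean of two positive reals. -/
noncomputable def logMean (a b : ℝ) : ℝ :=
  if a = b then a else (b - a) / (Real.log b - Real.log a)

/-- The identric mean of two positive reals. -/
noncomputable def idMean (a b : ℝ) : ℝ :=
  if a = b then a else Real.exp (-1) * (b ^ b / a ^ a) ^ (b - a)⁻¹

/-- The weighted arithmetic mean `a ∇_v b`. -/
def wArith (v a b : ℝ) : ℝ := (1 - v) * a + v * b

/-- The weighted geometric mean `a ♯_v b`. -/
noncomputable def wGeom (v a b : ℝ) : ℝ := a ^ (1 - v) * b ^ v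

/-- The weighted harmonic mean `a !_v b`. -/
noncomputable def wHarm (v a b : ℝ) : ℝ := ((1 - v) / a + v / b)⁻¹

/-- The weighted logarithmic mean `L_v(a,b)` (for `a ≠ b`, `v ∈ (0,1)`). -/
noncomputable def wLog (v a b : ℝ) : ℝ :=
  (1 / (Real.log a - Real.log b)) *
    (((1 - v) / v) * (a - a ^ (1 - v) * b ^ v) + (v / (1 - v)) * (a ^ (1 - v) * b ^ v - b))

/-- The weighted identric mean `I_v(a,b)` (for `a ≠ b`, `v ∈ (0,1)`). -/
noncomputable def wId (v a b : ℝ) : ℝ :=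
  Real.exp (-1) * wArith v a b ^ ((1 - 2 * v) * wArith v a b / (v * (1 - v) * (b - a))) *
    (b ^ (v * b / (1 - v)) / a ^ ((1 - v) * a / v)) ^ (b - a)⁻¹

open Set Filter Topology Real

section IdMeanConcave

noncomputable def gA (a x : ℝ) : ℝ := (a * Real.log a - x * Real.log x) / (a - x) - 1
noncomputable def psiA (a x : ℝ) : ℝ := (a * (Real.log a - Real.log x) - (a - x)) / (a - x)^2
noncomputable def FdA (a x : ℝ) : ℝ := if x = a then 1/2 else Real.exp (gA a x) * psiA a x

lemma my_basic (s : ℝ) (hs : 1 < s) : 2 * Real.log s < s - s⁻¹ := by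
  have key : StrictMonoOn (fun t : ℝ => t - t⁻¹ - 2 * Real.log t) (Set.Ici 1) := by
    apply strictMonoOn_of_deriv_pos (convex_Ici 1)
    · intro t ht
      have ht0 : t ≠ 0 := by simp only [mem_Ici] at ht; linarith
      exact (((continuousAt_id.sub (continuousAt_inv₀ ht0)).sub
        ((Real.continuousAt_log ht0).const_mul 2)).continuousWithinAt)
    · intro t ht
      rw [interior_Ici] at ht
      have ht1 : (1:ℝ) < t := ht
      have ht0 : t ≠ 0 := by linarith
      have hd : HasDerivAt (fun t : ℝ => t - t⁻¹ - 2 * Real.log t)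
          (1 - (-(t^2)⁻¹) - 2 * t⁻¹) t := by
        exact ((hasDerivAt_id t).sub (hasDerivAt_inv ht0)).sub
          ((Real.hasDerivAt_log ht0).const_mul 2)
      rw [hd.deriv]
      have h1 : (1:ℝ) - (-(t^2)⁻¹) - 2 * t⁻¹ = (t - 1)^2 / t^2 := by
        field_simp; ring
      rw [h1]
      exact div_pos (pow_pos (by linarith) 2) (pow_pos (by linarith) 2)
  have h := key (Set.self_mem_Ici) (le_of_lt hs) hs
  simp only [Real.log_one] at h
  norm_num at h
  linarith

lemma my_key {x a : ℝ} (hx : 0 < x) (ha : 0 < a) (hne : x ≠ a) :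
    a * x * (Real.log a - Real.log x)^2 < (a - x)^2 := by
  have aux : ∀ u v : ℝ, 0 < u → u < v → v * u * (Real.log v - Real.log u)^2 < (v - u)^2 := by
    intro u v hu huv
    have hv : 0 < v := hu.trans huv
    set s := Real.sqrt (v/u) with hsdef
    have hvu : 1 < v / u := (one_lt_div hu).mpr huv
    have hs1 : 1 < s := by
      rw [hsdef, show (1:ℝ) = Real.sqrt 1 by simp]
      exact Real.sqrt_lt_sqrt zero_le_one hvu
    have hs0 : 0 < s := lt_trans one_pos hs1
    have hs2 : s^2 = v / u := Real.sq_sqrt (by positivity)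
    have hxs2 : u * s^2 = v := by rw [hs2]; field_simp
    set L := Real.log v - Real.log u with hLdef
    have hL0 : 0 < L := sub_pos.mpr (Real.log_lt_log hu huv)
    have hlogs : 2 * Real.log s = L := by
      have : Real.log (s^2) = 2 * Real.log s := by
        rw [Real.log_pow]; push_cast; ring
      rw [← this, hs2, Real.log_div hv.ne' hu.ne']
    have hb := my_basic s hs1
    rw [hlogs] at hb
    -- hb : L < s - s⁻¹
    have hL' : u * s * L < v - u := by
      have hss : s - s⁻¹ = (v - u) / (u * s) := by
        rw [eq_div_iff (by positivity)]
        have : (s - s⁻¹) * (u * s) = u * s^2 - u := by field_simp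
        rw [this, hxs2]
      rw [hss] at hb
      calc u * s * L < u * s * ((v - u)/(u*s)) := by
            apply mul_lt_mul_of_pos_left hb (by positivity)
        _ = v - u := by field_simp
    have hsq : (u * s * L) * (u * s * L) < (v - u) * (v - u) :=
      mul_self_lt_mul_self (by positivity) hL'
    calc v * u * L^2 = (u * s * L) * (u * s * L) := by rw [← hxs2]; ring
      _ < (v - u) * (v - u) := hsq
      _ = (v - u)^2 := by ring
  rcases lt_or_gt_of_ne hne with h | h
  · have := aux x a hx h
    calc a * x * (Real.log a - Real.log x)^2 = a * x * (Real.log a - Real.log x)^2 := rfl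
      _ < (a - x)^2 := this
  · have := aux a x ha h
    have h1 : x * a * (Real.log x - Real.log a)^2 = a * x * (Real.log a - Real.log x)^2 := by ring
    have h2 : (x - a)^2 = (a - x)^2 := by ring
    linarith [this, h1 ▸ h2 ▸ this]

lemma my_idMean_eq {a x : ℝ} (ha : 0 < a) (hx : 0 < x) (hne : x ≠ a) :
    idMean x a = Real.exp (gA a x) := by
  unfold idMean
  rw [if_neg hne]
  have hxx : (0:ℝ) < x ^ x := Real.rpow_pos_of_pos hx x
  have haa : (0:ℝ) < a ^ a := Real.rpow_pos_of_pos ha a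
  rw [Real.rpow_def_of_pos (div_pos haa hxx), Real.log_div haa.ne' hxx.ne',
    Real.log_rpow ha, Real.log_rpow hx, ← Real.exp_add]
  congr 1
  unfold gA
  rw [div_eq_mul_inv]
  ring

lemma my_hasDerivAt_gA {a x : ℝ} (hx : 0 < x) (hne : x ≠ a) :
    HasDerivAt (gA a) (psiA a x) x := by
  have hd : a - x ≠ 0 := sub_ne_zero.mpr (Ne.symm hne)
  have hnum : HasDerivAt (fun y : ℝ => a * Real.log a - y * Real.log y)
      (-(1 * Real.log x + x * x⁻¹)) x := by
    exact ((hasDerivAt_id x).mul (Real.hasDerivAt_log hx.ne')).const_sub (a * Real.log a)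
  have hden : HasDerivAt (fun y : ℝ => a - y) (-1) x := by
    simpa using (hasDerivAt_id x).const_sub a
  have h := (hnum.div hden hd).sub_const 1
  refine h.congr_deriv ?_
  unfold psiA
  field_simp
  ring

lemma my_hasDerivAt_psiA {a x : ℝ} (hx : 0 < x) (hne : x ≠ a) :
    HasDerivAt (psiA a)
      (((1 - a * x⁻¹) * (a-x)^2 - (a * (Real.log a - Real.log x) - (a - x)) * (2*(a-x)*(-1))) / ((a-x)^2)^2) x := by
  have hd : (a - x)^2 ≠ 0 := pow_ne_zero 2 (sub_ne_zero.mpr (Ne.symm hne))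
  have hnum : HasDerivAt (fun y : ℝ => a * (Real.log a - Real.log y) - (a - y))
      (a * (0 - x⁻¹) - (0 - 1)) x :=
    (((hasDerivAt_const x (Real.log a)).sub (Real.hasDerivAt_log hx.ne')).const_mul a).sub
      ((hasDerivAt_const x a).sub (hasDerivAt_id x))
  have hden : HasDerivAt (fun y : ℝ => (a - y)^2) (2*(a-x)^1*(-1)) x := by
    have := ((hasDerivAt_const x a).sub (hasDerivAt_id x)).fun_pow 2
    simpa using this
  have h := hnum.div hden hd
  refine h.congr_deriv ?_
  ring

lemma my_second_neg {a x : ℝ} (ha : 0 < a) (hx : 0 < x) (hne : x ≠ a) :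
    ∃ E : ℝ, HasDerivAt (fun y => Real.exp (gA a y) * psiA a y) E x ∧ E < 0 := by
  have hd : a - x ≠ 0 := sub_ne_zero.mpr (Ne.symm hne)
  have hg := my_hasDerivAt_gA hx hne
  have hp := my_hasDerivAt_psiA hx hne
  refine ⟨_, (hg.exp.mul hp), ?_⟩
  set L := Real.log a - Real.log x with hL
  have hkey := my_key hx ha hne
  have hval : Real.exp (gA a x) * psiA a x * psiA a x +
      Real.exp (gA a x) *
        (((1 - a * x⁻¹) * (a-x)^2 - (a * L - (a - x)) * (2*(a-x)*(-1))) / ((a-x)^2)^2)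
      = Real.exp (gA a x) * ((a * (a * x * L^2 - (a-x)^2)) / (x * (a-x)^4)) := by
    unfold psiA
    rw [← hL]
    field_simp
    ring
  rw [hval]
  apply mul_neg_of_pos_of_neg (Real.exp_pos _)
  apply div_neg_of_neg_of_pos
  · have h1 : a * x * L^2 - (a-x)^2 < 0 := by rw [hL]; linarith
    exact mul_neg_of_pos_of_neg ha h1
  · positivity

lemma my_ev_pos {a : ℝ} (ha : 0 < a) : ∀ᶠ x in 𝓝[≠] a, (0:ℝ) < x :=
  eventually_nhdsWithin_of_eventually_nhds (eventually_gt_nhds ha)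

lemma my_ev_ne (a : ℝ) : ∀ᶠ x in 𝓝[≠] a, x ≠ a :=
  eventually_mem_nhdsWithin

lemma my_tendsto_gA {a : ℝ} (ha : 0 < a) :
    Tendsto (gA a) (𝓝[≠] a) (𝓝 (Real.log a)) := by
  have h : Tendsto (fun x => (a * Real.log a - x * Real.log x) / (a - x)) (𝓝[≠] a)
      (𝓝 (Real.log a + 1)) := by
    apply HasDerivAt.lhopital_zero_nhdsNE
      (f' := fun x => -(1 * Real.log x + x * x⁻¹)) (g' := fun _ => (-1 : ℝ))
    · filter_upwards [my_ev_pos ha] with x hx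
      exact ((hasDerivAt_id x).mul (Real.hasDerivAt_log hx.ne')).const_sub (a * Real.log a)
    · filter_upwards with x
      simpa using (hasDerivAt_id x).const_sub a
    · filter_upwards with x; norm_num
    · have h1 : ContinuousAt (fun x : ℝ => a * Real.log a - x * Real.log x) a :=
        continuousAt_const.sub (continuousAt_id.mul (Real.continuousAt_log ha.ne'))
      have h2 := h1.tendsto
      rw [show a * Real.log a - a * Real.log a = 0 by ring] at h2
      exact h2.mono_left nhdsWithin_le_nhds
    · have h2 : Tendsto (fun x : ℝ => a - x) (𝓝 a) (𝓝 (a - a)) :=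
        (continuousAt_const.sub continuousAt_id).tendsto
      rw [sub_self] at h2
      exact h2.mono_left nhdsWithin_le_nhds
    · have h1 : ContinuousAt (fun x : ℝ => Real.log x + 1) a :=
        (Real.continuousAt_log ha.ne').add continuousAt_const
      have h2 := h1.tendsto.mono_left (nhdsWithin_le_nhds (s := {a}ᶜ))
      apply h2.congr'
      filter_upwards [my_ev_pos ha] with x hx
      field_simp
  have h2 := h.sub_const 1
  rw [show Real.log a + 1 - 1 = Real.log a by ring] at h2
  exact h2

lemma my_tendsto_psiA {a : ℝ} (ha : 0 < a) :
    Tendsto (psiA a) (𝓝[≠] a) (𝓝 ((2*a)⁻¹)) := by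
  -- inner L'Hopital : (1 - a*x⁻¹) / (2*x - 2*a) → (2a)⁻¹
  have inner : Tendsto (fun x : ℝ => (1 - a * x⁻¹) / (2*x - 2*a)) (𝓝[≠] a) (𝓝 ((2*a)⁻¹)) := by
    apply HasDerivAt.lhopital_zero_nhdsNE
      (f' := fun x => a * (x^2)⁻¹) (g' := fun _ => (2:ℝ))
    · filter_upwards [my_ev_pos ha] with x hx
      have h := ((hasDerivAt_inv hx.ne').const_mul a).const_sub 1
      refine h.congr_deriv ?_
      ring
    · filter_upwards with x
      simpa using ((hasDerivAt_id x).const_mul 2).sub_const (2*a)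
    · filter_upwards with x; norm_num
    · have h1 : Tendsto (fun x : ℝ => 1 - a * x⁻¹) (𝓝 a) (𝓝 (1 - a * a⁻¹)) :=
        (continuousAt_const.sub (continuousAt_const.mul (continuousAt_inv₀ ha.ne'))).tendsto
      rw [show (1:ℝ) - a * a⁻¹ = 0 by field_simp; ring] at h1
      exact h1.mono_left nhdsWithin_le_nhds
    · have h1 : Tendsto (fun x : ℝ => 2*x - 2*a) (𝓝 a) (𝓝 (2*a - 2*a)) :=
        (by fun_prop : ContinuousAt (fun x : ℝ => 2*x - 2*a) a).tendsto
      rw [sub_self] at h1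
      exact h1.mono_left nhdsWithin_le_nhds
    · have h1 : ContinuousAt (fun x : ℝ => a * (x^2)⁻¹ / 2) a :=
        (continuousAt_const.mul ((continuousAt_id.pow 2).inv₀ (pow_ne_zero 2 ha.ne'))).div_const 2
      have h2 := h1.tendsto
      rw [show a * (a^2)⁻¹ / 2 = (2*a)⁻¹ by field_simp] at h2
      exact h2.mono_left nhdsWithin_le_nhds
  -- outer L'Hopital
  have outer : Tendsto (fun x : ℝ =>
      (a * (Real.log a - Real.log x) - (a - x)) / (a - x)^2) (𝓝[≠] a) (𝓝 ((2*a)⁻¹)) := by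
    apply HasDerivAt.lhopital_zero_nhdsNE
      (f' := fun x => a * (0 - x⁻¹) - (0 - 1)) (g' := fun x => 2*x - 2*a)
    · filter_upwards [my_ev_pos ha] with x hx
      exact (((hasDerivAt_const x (Real.log a)).sub (Real.hasDerivAt_log hx.ne')).const_mul a).sub
        ((hasDerivAt_const x a).sub (hasDerivAt_id x))
    · filter_upwards with x
      have h := ((hasDerivAt_const x a).sub (hasDerivAt_id x)).fun_pow 2
      refine h.congr_deriv ?_
      simp; ring
    · filter_upwards [my_ev_ne a] with x hx
      intro hcon
      apply hx
      have : 2 * (x - a) = 0 := by linarith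
      have := mul_eq_zero.mp this
      rcases this with h | h
      · norm_num at h
      · linarith [sub_eq_zero.mp h]
    · have h1 : Tendsto (fun x : ℝ => a * (Real.log a - Real.log x) - (a - x)) (𝓝 a)
          (𝓝 (a * (Real.log a - Real.log a) - (a - a))) :=
        ((continuousAt_const.mul (continuousAt_const.sub
          (Real.continuousAt_log ha.ne'))).sub (continuousAt_const.sub continuousAt_id)).tendsto
      rw [show a * (Real.log a - Real.log a) - (a - a) = 0 by ring] at h1
      exact h1.mono_left nhdsWithin_le_nhds
    · have h1 : Tendsto (fun x : ℝ => (a - x)^2) (𝓝 a) (𝓝 ((a - a)^2)) :=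
        ((continuousAt_const.sub continuousAt_id).pow 2).tendsto
      rw [show ((a:ℝ) - a)^2 = 0 by ring] at h1
      exact h1.mono_left nhdsWithin_le_nhds
    · apply inner.congr
      intro x
      congr 1
      ring
  exact outer

lemma my_tendsto_phi {a : ℝ} (ha : 0 < a) :
    Tendsto (fun x => Real.exp (gA a x) * psiA a x) (𝓝[≠] a) (𝓝 (1/2)) := by
  have h := (Real.continuous_exp.continuousAt.tendsto.comp (my_tendsto_gA ha)).mul (my_tendsto_psiA ha)
  rw [show Real.exp (Real.log a) * (2*a)⁻¹ = 1/2 by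
    rw [Real.exp_log ha]; field_simp] at h
  exact h

-- eventual equality of idMean with exp ∘ gA near a point x ≠ a, x > 0
lemma my_evEq {a x : ℝ} (ha : 0 < a) (hx : 0 < x) (hne : x ≠ a) :
    (fun y => idMean y a) =ᶠ[𝓝 x] (fun y => Real.exp (gA a y)) := by
  have hopen : IsOpen (Ioi (0:ℝ) ∩ {a}ᶜ) := isOpen_Ioi.inter isOpen_compl_singleton
  have hmem : x ∈ Ioi (0:ℝ) ∩ {a}ᶜ := ⟨hx, hne⟩
  filter_upwards [hopen.mem_nhds hmem] with y hy
  exact my_idMean_eq ha hy.1 hy.2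

lemma my_hasDerivAt_off {a x : ℝ} (ha : 0 < a) (hx : 0 < x) (hne : x ≠ a) :
    HasDerivAt (fun y => idMean y a) (Real.exp (gA a x) * psiA a x) x := by
  have h := (my_hasDerivAt_gA hx hne).exp
  exact h.congr_of_eventuallyEq (my_evEq ha hx hne)

lemma my_tendsto_f {a : ℝ} (ha : 0 < a) :
    Tendsto (fun x => idMean x a) (𝓝[≠] a) (𝓝 a) := by
  have h := (Real.continuous_exp.continuousAt.tendsto.comp (my_tendsto_gA ha))
  rw [Real.exp_log ha] at h
  apply h.congr'
  filter_upwards [my_ev_pos ha, my_ev_ne a] with x h1 h2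
  exact (my_idMean_eq ha h1 h2).symm

lemma my_continuousAt_a {a : ℝ} (ha : 0 < a) :
    ContinuousAt (fun x => idMean x a) a := by
  have hval : idMean a a = a := if_pos rfl
  have h2 := tendsto_pure_nhds (fun x => idMean x a) a
  have h3 : Tendsto (fun x => idMean x a) (𝓝[≠] a ⊔ pure a) (𝓝 a) := by
    rw [tendsto_sup]
    refine ⟨my_tendsto_f ha, ?_⟩
    rw [hval] at h2
    exact h2
  rw [nhdsNE_sup_pure] at h3
  rw [ContinuousAt, hval]
  exact h3

lemma my_hasDerivAt_at_a {a : ℝ} (ha : 0 < a) :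
    HasDerivAt (fun x => idMean x a) (1/2) a := by
  rw [hasDerivAt_iff_tendsto_slope]
  have hval : idMean a a = a := if_pos rfl
  have h : Tendsto (fun x => (idMean x a - idMean a a) / (x - a)) (𝓝[≠] a) (𝓝 (1/2)) := by
    apply HasDerivAt.lhopital_zero_nhdsNE
      (f' := fun x => Real.exp (gA a x) * psiA a x) (g' := fun _ => (1:ℝ))
    · filter_upwards [my_ev_pos ha, my_ev_ne a] with x h1 h2
      exact (my_hasDerivAt_off ha h1 h2).sub_const _
    · filter_upwards with x
      simpa using (hasDerivAt_id x).sub_const a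
    · filter_upwards with x; norm_num
    · have h5 := (my_tendsto_f ha).sub_const (idMean a a)
      rw [show a - idMean a a = 0 by rw [hval]; ring] at h5
      exact h5
    · have h1 : Tendsto (fun x : ℝ => x - a) (𝓝 a) (𝓝 (a - a)) :=
        (continuousAt_id.sub continuousAt_const).tendsto
      rw [sub_self] at h1
      exact h1.mono_left nhdsWithin_le_nhds
    · simpa using my_tendsto_phi ha
  apply h.congr
  intro x
  rw [slope_def_field]

lemma my_hasDerivAt_all {a : ℝ} (ha : 0 < a) {x : ℝ} (hx : 0 < x) :
    HasDerivAt (fun y => idMean y a) (FdA a x) x := by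
  by_cases hne : x = a
  · subst hne
    rw [show FdA x x = 1/2 from if_pos rfl]
    exact my_hasDerivAt_at_a ha
  · rw [show FdA a x = Real.exp (gA a x) * psiA a x from if_neg hne]
    exact my_hasDerivAt_off ha hx hne

lemma my_FdA_evEq {a x : ℝ} (hne : x ≠ a) :
    FdA a =ᶠ[𝓝 x] (fun y => Real.exp (gA a y) * psiA a y) := by
  filter_upwards [isOpen_compl_singleton.mem_nhds hne] with y hy
  exact if_neg hy

lemma my_continuousOn_FdA {a : ℝ} (ha : 0 < a) : ContinuousOn (FdA a) (Ioi 0) := by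
  intro x hx
  by_cases hne : x = a
  · subst hne
    apply ContinuousAt.continuousWithinAt
    have hp : Tendsto (FdA x) (𝓝[≠] x) (𝓝 (1/2)) := by
      apply (my_tendsto_phi ha).congr'
      filter_upwards [my_ev_ne x] with y hy
      exact (if_neg hy).symm
    have h2 := tendsto_pure_nhds (FdA x) x
    rw [show FdA x x = 1/2 from if_pos rfl] at h2
    have h3 : Tendsto (FdA x) (𝓝[≠] x ⊔ pure x) (𝓝 (1/2)) := by
      rw [tendsto_sup]; exact ⟨hp, h2⟩
    rw [nhdsNE_sup_pure] at h3
    rw [ContinuousAt, show FdA x x = 1/2 from if_pos rfl]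
    exact h3
  · apply ContinuousAt.continuousWithinAt
    have hc : ContinuousAt (fun y => Real.exp (gA a y) * psiA a y) x :=
      (Real.continuous_exp.continuousAt.comp (my_hasDerivAt_gA hx hne).continuousAt).mul
        (my_hasDerivAt_psiA hx hne).continuousAt
    exact hc.congr (my_FdA_evEq hne).symm

lemma my_strictAntiOn_FdA {a : ℝ} (ha : 0 < a) : StrictAntiOn (FdA a) (Ioi 0) := by
  have hIoc : Ioc (0:ℝ) a ⊆ Ioi 0 := fun y hy => hy.1
  have hIci : Ici a ⊆ Ioi (0:ℝ) := fun y hy => lt_of_lt_of_le ha hy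
  have derivneg : ∀ x, 0 < x → x ≠ a → deriv (FdA a) x < 0 := by
    intro x hx hne
    obtain ⟨E, hE, hEneg⟩ := my_second_neg ha hx hne
    have h2 : HasDerivAt (FdA a) E x := hE.congr_of_eventuallyEq (my_FdA_evEq hne)
    rwa [h2.deriv]
  have S1 : StrictAntiOn (FdA a) (Ioc 0 a) := by
    apply strictAntiOn_of_deriv_neg (convex_Ioc 0 a) ((my_continuousOn_FdA ha).mono hIoc)
    intro x hx
    rw [interior_Ioc] at hx
    exact derivneg x hx.1 (ne_of_lt hx.2)
  have S2 : StrictAntiOn (FdA a) (Ici a) := by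
    apply strictAntiOn_of_deriv_neg (convex_Ici a) ((my_continuousOn_FdA ha).mono hIci)
    intro x hx
    rw [interior_Ici] at hx
    exact derivneg x (ha.trans hx) (ne_of_gt hx)
  intro x hx y hy hxy
  rcases le_or_gt y a with hya | hya
  · exact S1 ⟨hx, le_of_lt (lt_of_lt_of_le hxy hya)⟩ ⟨hy, hya⟩ hxy
  · rcases le_or_gt a x with hax | hax
    · exact S2 hax (le_of_lt (lt_of_le_of_lt hax hxy)) hxy
    · calc FdA a y < FdA a a := S2 Set.self_mem_Ici (le_of_lt hya) hya
        _ < FdA a x := S1 ⟨hx, le_of_lt hax⟩ ⟨ha, le_rfl⟩ hax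

/-- For fixed `a > 0`, the map `x ↦ I(x,a)` is strictly concave on `(0,∞)`. -/
theorem strictConcaveOn_idMean (a : ℝ) (ha : 0 < a) :
    StrictConcaveOn ℝ (Set.Ioi (0 : ℝ)) (fun x => idMean x a) := by
  apply StrictAntiOn.strictConcaveOn_of_deriv (convex_Ioi 0)
  · intro x hx
    exact (my_hasDerivAt_all ha hx).continuousAt.continuousWithinAt
  · rw [interior_Ioi]
    intro x hx y hy hxy
    rw [(my_hasDerivAt_all ha hx).deriv, (my_hasDerivAt_all ha hy).deriv]
    exact my_strictAntiOn_FdA ha hx hy hxy
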